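/- Let V be a finite-dimensional real vector space with the natural pairing on W = V ⊕ V*. If φ is a generalized almost complex structure on W (orthogonal with φ² = −1), then its +i eigenspace L ⊂ W ⊗ ℂ is a maximal isotropic subspace satisfying L ∩ L̄ = 0, where the pairing is extended complex-bilinearly. -/

import Mathlib

/- STATEMENT 4: If φ is a generalized almost complex structure on W = V ⊕ V*
   (orthogonal for the natural pairing, with φ² = −1), then its +i eigenspace
   L ⊂ W ⊗ ℂ is maximal isotropic (for the complex-bilinear extension of the
   pairing), of complex dimension dim_ℝ V, and satisfies L ∩ L̄ = 0. -/

open Module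
open scoped TensorProduct

noncomputable section

def naturalPairing (V : Type*) [AddCommGroup V] [Module ℝ V] :
    LinearMap.BilinForm ℝ (V × Module.Dual ℝ V) :=
  LinearMap.mk₂ ℝ (fun v w => (v.2 w.1 + w.2 v.1) / 2)
    (by intro m₁ m₂ n; simp [map_add]; ring)
    (by intro c m n; simp; ring)
    (by intro m n₁ n₂; simp [map_add]; ring)
    (by intro c m n; simp; ring)

/-- The complexification `(V ⊕ V*) ⊗ ℂ`. -/
def WC (V : Type*) [AddCommGroup V] [Module ℝ V] : Type _ :=
  ℂ ⊗[ℝ] (V × Module.Dual ℝ V)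

instance (V : Type*) [AddCommGroup V] [Module ℝ V] : AddCommGroup (WC V) :=
  TensorProduct.addCommGroup

instance (V : Type*) [AddCommGroup V] [Module ℝ V] : Module ℂ (WC V) :=
  TensorProduct.leftModule

instance (V : Type*) [AddCommGroup V] [Module ℝ V] : Module ℝ (WC V) := by
  unfold WC; infer_instance

/-- The complex-bilinear extension of the natural pairing to `(V ⊕ V*) ⊗ ℂ`. -/
def naturalPairingC (V : Type*) [AddCommGroup V] [Module ℝ V] :
    LinearMap.BilinForm ℂ (WC V) :=
  (naturalPairing V).baseChange ℂ

/-- The complexification of a real endomorphism of `V ⊕ V*`. -/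
def cplx {V : Type*} [AddCommGroup V] [Module ℝ V]
    (φ : (V × Module.Dual ℝ V) →ₗ[ℝ] (V × Module.Dual ℝ V)) : WC V →ₗ[ℂ] WC V :=
  LinearMap.baseChange ℂ φ

/-- Complex conjugation on `(V ⊕ V*) ⊗ ℂ` (an ℝ-linear involution). -/
def conjW (V : Type*) [AddCommGroup V] [Module ℝ V] : WC V →ₗ[ℝ] WC V :=
  LinearMap.rTensor (V × Module.Dual ℝ V) (Complex.conjAe.toLinearMap : ℂ →ₗ[ℝ] ℂ)

/-! ### Auxiliary material -/

section Aux

variable {V : Type*} [AddCommGroup V] [Module ℝ V]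

local notation "Wr" => V × Module.Dual ℝ V

instance : IsScalarTower ℝ ℂ (WC V) := by unfold WC; infer_instance
instance [FiniteDimensional ℝ V] : FiniteDimensional ℂ (WC V) := by unfold WC; infer_instance
instance [FiniteDimensional ℝ V] : FiniteDimensional ℝ (WC V) := by unfold WC; infer_instance

/-! Computation lemmas stated at the canonical tensor-product type. -/

lemma cplx_aux (φ : Wr →ₗ[ℝ] Wr) (a b : Wr) :
    LinearMap.baseChange ℂ φ ((1:ℂ) ⊗ₜ[ℝ] a + Complex.I ⊗ₜ[ℝ] b) =
      (1:ℂ) ⊗ₜ[ℝ] (φ a) + Complex.I ⊗ₜ[ℝ] (φ b) := by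
  simp

lemma conjW_aux (a b : Wr) :
    LinearMap.rTensor Wr (Complex.conjAe.toLinearMap : ℂ →ₗ[ℝ] ℂ)
        ((1:ℂ) ⊗ₜ[ℝ] a + Complex.I ⊗ₜ[ℝ] b) =
      (1:ℂ) ⊗ₜ[ℝ] a + Complex.I ⊗ₜ[ℝ] (-b) := by
  rw [map_add, LinearMap.rTensor_tmul, LinearMap.rTensor_tmul]
  simp only [AlgEquiv.toLinearMap_apply, map_one, Complex.conjAe_coe, Complex.conj_I]
  rw [TensorProduct.tmul_neg, ← TensorProduct.neg_tmul]

lemma pairC_aux (B : LinearMap.BilinForm ℝ Wr) (a b c d : Wr) :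
    B.baseChange ℂ ((1:ℂ) ⊗ₜ[ℝ] a + Complex.I ⊗ₜ[ℝ] b)
        ((1:ℂ) ⊗ₜ[ℝ] c + Complex.I ⊗ₜ[ℝ] d) =
      ((B a c - B b d : ℝ) : ℂ) + ((B a d + B b c : ℝ) : ℂ) * Complex.I := by
  simp only [map_add, LinearMap.add_apply, LinearMap.BilinForm.baseChange_tmul]
  simp only [mul_one, one_mul, Complex.I_mul_I, smul_eq_mul, Complex.real_smul]
  push_cast
  ring

lemma smulI_aux (a b : Wr) :
    Complex.I • ((1:ℂ) ⊗ₜ[ℝ] a + Complex.I ⊗ₜ[ℝ] b : ℂ ⊗[ℝ] Wr) =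
      (1:ℂ) ⊗ₜ[ℝ] (-b) + Complex.I ⊗ₜ[ℝ] a := by
  rw [smul_add, TensorProduct.smul_tmul', TensorProduct.smul_tmul']
  simp only [smul_eq_mul, mul_one, Complex.I_mul_I]
  rw [show ((-1 : ℂ) ⊗ₜ[ℝ] b : ℂ ⊗[ℝ] Wr) = (1:ℂ) ⊗ₜ[ℝ] (-b) by
    rw [TensorProduct.tmul_neg, ← TensorProduct.neg_tmul]]
  abel

lemma rsmul_aux (r : ℝ) (a b : Wr) :
    r • ((1:ℂ) ⊗ₜ[ℝ] a + Complex.I ⊗ₜ[ℝ] b : ℂ ⊗[ℝ] Wr) =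
      (1:ℂ) ⊗ₜ[ℝ] (r • a) + Complex.I ⊗ₜ[ℝ] (r • b) := by
  rw [smul_add, TensorProduct.smul_tmul', TensorProduct.smul_tmul',
    TensorProduct.smul_tmul, TensorProduct.smul_tmul]

/-! Lemmas at the level of `WC V`. -/

/-- The element `1 ⊗ a + i ⊗ b` of the complexification. -/
def elt (a b : Wr) : WC V := (1 : ℂ) ⊗ₜ[ℝ] a + Complex.I ⊗ₜ[ℝ] b

def reW : WC V →ₗ[ℝ] Wr :=
  (TensorProduct.lid ℝ Wr).toLinearMap ∘ₗ LinearMap.rTensor Wr Complex.reLm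

def imW : WC V →ₗ[ℝ] Wr :=
  (TensorProduct.lid ℝ Wr).toLinearMap ∘ₗ LinearMap.rTensor Wr Complex.imLm

@[simp] lemma reW_tmul (c : ℂ) (m : Wr) : reW (c ⊗ₜ[ℝ] m : WC V) = c.re • m := rfl
@[simp] lemma imW_tmul (c : ℂ) (m : Wr) : imW (c ⊗ₜ[ℝ] m : WC V) = c.im • m := rfl

lemma decompW (x : WC V) : ∃ a b : Wr, x = elt a b := by
  induction x using TensorProduct.induction_on with
  | zero => exact ⟨0, 0, by simp [elt]; rfl⟩
  | tmul c m =>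
    refine ⟨c.re • m, c.im • m, ?_⟩
    unfold elt
    rw [← TensorProduct.smul_tmul, ← TensorProduct.smul_tmul, ← TensorProduct.add_tmul]
    congr 1
    simp [Complex.real_smul]
  | add x y hx hy =>
    obtain ⟨a, b, rfl⟩ := hx; obtain ⟨c, d, rfl⟩ := hy
    refine ⟨a + c, b + d, ?_⟩
    unfold elt
    rw [TensorProduct.tmul_add, TensorProduct.tmul_add]
    abel

lemma elt_add (a b c d : Wr) : (elt a b : WC V) + elt c d = elt (a + c) (b + d) := by
  unfold elt
  rw [TensorProduct.tmul_add, TensorProduct.tmul_add]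
  abel

lemma elt_sub (a b c d : Wr) : (elt a b : WC V) - elt c d = elt (a - c) (b - d) := by
  unfold elt
  rw [TensorProduct.tmul_sub, TensorProduct.tmul_sub]
  abel

lemma real_smul_elt (r : ℝ) (a b : Wr) : r • (elt a b : WC V) = elt (r • a) (r • b) :=
  rsmul_aux r a b

lemma smul_I_elt (a b : Wr) : Complex.I • (elt a b : WC V) = elt (-b) a :=
  smulI_aux a b

lemma cplx_elt (φ : Wr →ₗ[ℝ] Wr) (a b : Wr) :
    cplx φ (elt a b : WC V) = elt (φ a) (φ b) :=
  cplx_aux φ a b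

lemma conjW_elt (a b : Wr) : conjW V (elt a b : WC V) = elt a (-b) :=
  conjW_aux a b

lemma pairC_elt (a b c d : Wr) :
    naturalPairingC V (elt a b) (elt c d) =
      ((naturalPairing V a c - naturalPairing V b d : ℝ) : ℂ)
        + ((naturalPairing V a d + naturalPairing V b c : ℝ) : ℂ) * Complex.I :=
  pairC_aux (naturalPairing V) a b c d

lemma uniqW {a b : Wr} (h : (elt a b : WC V) = 0) : a = 0 ∧ b = 0 := by
  have hre := congrArg (reW (V := V)) h
  have him := congrArg (imW (V := V)) h
  have e1 : reW (elt a b : WC V) = a := by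
    unfold elt; erw [map_add, reW_tmul, reW_tmul]; simp
  have e2 : imW (elt a b : WC V) = b := by
    unfold elt; erw [map_add, imW_tmul, imW_tmul]; simp
  rw [e1, map_zero] at hre
  rw [e2, map_zero] at him
  exact ⟨hre, him⟩

lemma elt_inj {a b c d : Wr} (h : (elt a b : WC V) = elt c d) : a = c ∧ b = d := by
  have h0 : (elt (a - c) (b - d) : WC V) = 0 := by
    rw [← elt_sub, h, sub_self]
  obtain ⟨h1, h2⟩ := uniqW h0
  exact ⟨sub_eq_zero.mp h1, sub_eq_zero.mp h2⟩

/-- Nondegeneracy of the real natural pairing. -/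
lemma naturalPairing_nondeg [FiniteDimensional ℝ V] (w : Wr)
    (h : ∀ m : Wr, naturalPairing V w m = 0) : w = 0 := by
  obtain ⟨v, α⟩ := w
  have h1 : v = 0 := by
    rw [← Module.forall_dual_apply_eq_zero_iff ℝ v]
    intro β
    have := h (0, β)
    simp [naturalPairing] at this
    simpa using this
  have h2 : α = 0 := by
    ext x
    have := h (x, 0)
    simp [naturalPairing] at this
    simpa using this
  simp [h1, h2, Prod.ext_iff]

/-- Nondegeneracy of the complexified pairing against real vectors. -/
lemma naturalPairingC_nondeg [FiniteDimensional ℝ V] (x : WC V)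
    (h : ∀ m : Wr, naturalPairingC V x (elt m 0) = 0) : x = 0 := by
  obtain ⟨a, b, rfl⟩ := decompW x
  have key : ∀ m : Wr, naturalPairing V a m = 0 ∧ naturalPairing V b m = 0 := by
    intro m
    have := h m
    rw [pairC_elt, Complex.ext_iff] at this
    simp at this
    constructor
    · simpa using this.1
    · simpa using this.2
  have ha : a = 0 := naturalPairing_nondeg a fun m => (key m).1
  have hb : b = 0 := naturalPairing_nondeg b fun m => (key m).2
  simp [ha, hb, elt]; rfl

end Aux

theorem gacs_eigenspace_maximal_isotropic
    (V : Type*) [AddCommGroup V] [Module ℝ V] [FiniteDimensional ℝ V]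
    (φ : (V × Module.Dual ℝ V) →ₗ[ℝ] (V × Module.Dual ℝ V))
    (hφorth : ∀ v w, naturalPairing V (φ v) (φ w) = naturalPairing V v w)
    (hφsq : ∀ v, φ (φ v) = -v)
    -- `L` is the +i eigenspace of the complexification of φ:
    (L : Submodule ℂ (WC V))
    (hL : ∀ x : WC V, x ∈ L ↔ cplx φ x = Complex.I • x) :
    -- L is isotropic,
    (∀ x ∈ L, ∀ y ∈ L, naturalPairingC V x y = 0) ∧
    -- maximal (anything orthogonal to L lies in L),
    (∀ x, (∀ y ∈ L, naturalPairingC V x y = 0) → x ∈ L) ∧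
    -- of complex dimension dim_ℝ V,
    Module.finrank ℂ L = Module.finrank ℝ V ∧
    -- and L ∩ L̄ = 0.
    (L : Set (WC V)) ∩ (conjW V '' (L : Set (WC V))) = {0} := by
  have memL : ∀ x : WC V, x ∈ L ↔ ∃ a, x = elt a (-φ a) := by
    intro x
    rw [hL]
    obtain ⟨a, b, rfl⟩ := decompW x
    rw [cplx_elt, smul_I_elt]
    constructor
    · intro h
      obtain ⟨h1, h2⟩ := elt_inj h
      exact ⟨a, by rw [h1, neg_neg]⟩
    · rintro ⟨c, h⟩
      obtain ⟨h1, h2⟩ := elt_inj h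
      subst h1
      subst h2
      simp only [map_neg, hφsq, neg_neg]
  have hanti : ∀ a c : V × Module.Dual ℝ V,
      naturalPairing V a (φ c) = -naturalPairing V (φ a) c := by
    intro a c
    have := hφorth a (φ c)
    rw [hφsq] at this
    rw [← this, map_neg]
  have isoL : ∀ x ∈ L, ∀ y ∈ L, naturalPairingC V x y = 0 := by
    intro x hx y hy
    obtain ⟨a, rfl⟩ := (memL x).mp hx
    obtain ⟨c, rfl⟩ := (memL y).mp hy
    rw [pairC_elt]
    simp only [map_neg, LinearMap.neg_apply, neg_neg]
    rw [hφorth, hanti]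
    push_cast
    ring
  have isoLbar : ∀ a c : V × Module.Dual ℝ V,
      naturalPairingC V (elt a (φ a)) (elt c (φ c)) = 0 := by
    intro a c
    rw [pairC_elt, hφorth, hanti]
    push_cast
    ring
  refine ⟨isoL, ?_, ?_, ?_⟩
  · -- maximality
    intro x hx
    obtain ⟨a, b, rfl⟩ := decompW x
    set u : V × Module.Dual ℝ V := (2:ℝ)⁻¹ • (a + φ b) with hu
    have hpL : (elt u (-φ u) : WC V) ∈ L := (memL _).mpr ⟨u, rfl⟩
    have hφu : φ u = (2:ℝ)⁻¹ • (φ a - b) := by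
      rw [hu, map_smul, map_add, hφsq, ← sub_eq_add_neg]
    have hsplit : (elt a b : WC V) = elt u (-φ u) + elt (a - u) (φ (a - u)) := by
      rw [elt_add]
      congr 1
      · abel
      · rw [map_sub, hφu]
        module
    have hq0 : (elt (a - u) (φ (a - u)) : WC V) = 0 := by
      apply naturalPairingC_nondeg
      intro m
      have hm : (elt m 0 : WC V) =
          elt ((2:ℝ)⁻¹ • m) (-φ ((2:ℝ)⁻¹ • m)) + elt ((2:ℝ)⁻¹ • m) (φ ((2:ℝ)⁻¹ • m)) := by
        rw [elt_add]
        congr 1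
        · module
        · abel
      rw [hm, map_add]
      have hy1L : (elt ((2:ℝ)⁻¹ • m) (-φ ((2:ℝ)⁻¹ • m)) : WC V) ∈ L :=
        (memL _).mpr ⟨_, rfl⟩
      have e1 : naturalPairingC V (elt (a - u) (φ (a - u)))
          (elt ((2:ℝ)⁻¹ • m) (-φ ((2:ℝ)⁻¹ • m))) = 0 := by
        have hqx : (elt (a - u) (φ (a - u)) : WC V) = elt a b - elt u (-φ u) := by
          rw [hsplit]; abel
        rw [hqx, map_sub, LinearMap.sub_apply,
          hx _ hy1L, isoL _ hpL _ hy1L, sub_zero]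
      have e2 : naturalPairingC V (elt (a - u) (φ (a - u)))
          (elt ((2:ℝ)⁻¹ • m) (φ ((2:ℝ)⁻¹ • m))) = 0 := isoLbar _ _
      rw [e1, e2, add_zero]
    have : (elt a b : WC V) = elt u (-φ u) := by
      rw [hsplit, hq0, add_zero]
    rw [this]
    exact hpL
  · -- dimension
    have hgmem : ∀ a : V × Module.Dual ℝ V, (elt a (-φ a) : WC V) ∈ L :=
      fun a => (memL _).mpr ⟨a, rfl⟩
    set g : (V × Module.Dual ℝ V) →ₗ[ℝ] L :=
      { toFun := fun a => ⟨elt a (-φ a), hgmem a⟩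
        map_add' := by
          intro a b
          apply Subtype.ext
          show (elt (a + b) (-φ (a + b)) : WC V) = elt a (-φ a) + elt b (-φ b)
          rw [elt_add, map_add]
          congr 1
          abel
        map_smul' := by
          intro r a
          apply Subtype.ext
          show (elt (r • a) (-φ (r • a)) : WC V) = r • (elt a (-φ a) : WC V)
          rw [real_smul_elt, map_smul, smul_neg] } with hg
    have hginj : Function.Injective g := by
      intro a b hab
      have hab' : (elt a (-φ a) : WC V) = elt b (-φ b) := congrArg Subtype.val hab
      exact (elt_inj hab').1
    have hgsurj : Function.Surjective g := by
      rintro ⟨x, hxL⟩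
      obtain ⟨a, rfl⟩ := (memL x).mp hxL
      exact ⟨a, rfl⟩
    have e : (V × Module.Dual ℝ V) ≃ₗ[ℝ] L := LinearEquiv.ofBijective g ⟨hginj, hgsurj⟩
    have h1 : finrank ℝ L = finrank ℝ V + finrank ℝ V := by
      rw [← e.finrank_eq, Module.finrank_prod, Subspace.dual_finrank_eq]
    have h2 : finrank ℝ ℂ * finrank ℂ L = finrank ℝ L := Module.finrank_mul_finrank ℝ ℂ L
    rw [Complex.finrank_real_complex, h1] at h2
    omega
  · -- L ∩ conj L = {0}
    apply Set.eq_singleton_iff_unique_mem.mpr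
    constructor
    · exact ⟨L.zero_mem, 0, L.zero_mem, map_zero _⟩
    · rintro x ⟨hxL, y, hyL, rfl⟩
      obtain ⟨a, rfl⟩ := (memL y).mp hyL
      rw [conjW_elt, neg_neg] at hxL ⊢
      obtain ⟨c, hc⟩ := (memL _).mp hxL
      obtain ⟨h1, h2⟩ := elt_inj hc
      subst h1
      have hphia : φ a = 0 := by
        have h3 : φ a + φ a = 0 := by
          nth_rewrite 1 [h2]
          abel
        have h4 : (2:ℝ) • φ a = 0 := by rw [two_smul]; exact h3
        exact (smul_eq_zero.mp h4).resolve_left (by norm_num)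
      have ha : a = 0 := by
        have h4 := hφsq a
        rw [hphia, map_zero] at h4
        exact neg_eq_zero.mp h4.symm
      rw [ha]
      simp [elt]; rfl

end
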